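/- Let γ ∈ W and let f be a nonzero element of W[[t]]. Then for every ideal J of W[[t]] satisfying f·(t − 2γ)·W[[t]] ⊆ J and J properly contained in f·W[[t]], there exist α ∈ {0,1} and an integer m ≥ 1 such that J is the ideal generated by f·(t − 2γ) and α·2^m·f. -/

import Mathlib

set_option maxHeartbeats 800000

instance : Fact (Nat.Prime 2) := ⟨Nat.prime_two⟩

set_option linter.unusedSectionVars false

namespace StmtAux

variable {k : Type*} [Field k] [IsAlgClosed k] [CharP k 2]

local notation "W" => WittVector 2 k
local notation "R" => PowerSeries (WittVector 2 k)

lemma pow_two_mul (n : ℕ) (z : W) :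
    (2 : W) ^ n * z =
      (WittVector.verschiebung)^[n] ((WittVector.frobenius)^[n] z) := by
  induction n generalizing z with
  | zero => simp
  | succ n ih =>
    have h1 : (2 : W) ^ (n + 1) * z = (2 : W) ^ n * z * ((2 : ℕ) : W) := by
      push_cast; ring
    rw [h1, ← WittVector.verschiebung_frobenius ((2 : W) ^ n * z), ih,
      Function.iterate_succ_apply' WittVector.verschiebung,
      Function.iterate_succ_apply' WittVector.frobenius]
    congr 1
    exact (WittVector.verschiebung_frobenius_comm.symm.iterate_right n _)

lemma coeff_iterate_verschiebung_of_lt {n i : ℕ} (x : W) (hi : i < n) :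
    ((WittVector.verschiebung)^[n] x).coeff i = 0 := by
  induction n generalizing i with
  | zero => omega
  | succ n ih =>
    rw [Function.iterate_succ_apply' WittVector.verschiebung]
    cases i with
    | zero => exact WittVector.verschiebung_coeff_zero _
    | succ i =>
      rw [WittVector.verschiebung_coeff_succ]
      exact ih (by omega)

lemma two_pow_dvd_iff_coeff (n : ℕ) (x : W) :
    (2 : W) ^ n ∣ x ↔ ∀ i < n, x.coeff i = 0 := by
  constructor
  · rintro ⟨z, rfl⟩ i hi
    rw [pow_two_mul]
    exact coeff_iterate_verschiebung_of_lt _ hi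
  · intro h
    obtain ⟨z, hz⟩ :=
      ((WittVector.frobenius_bijective 2 k).surjective.iterate n) (x.shift n)
    refine ⟨z, ?_⟩
    rw [pow_two_mul, hz, ← WittVector.eq_iterate_verschiebung h]

lemma two_pow_dvd_sub_iff (n : ℕ) (x y : W) :
    (2 : W) ^ n ∣ x - y ↔ ∀ i < n, x.coeff i = y.coeff i := by
  rw [two_pow_dvd_iff_coeff]
  have hker := WittVector.mem_ker_truncate (p := 2) n (x - y)
  rw [RingHom.mem_ker, map_sub, sub_eq_zero] at hker
  rw [← hker]
  constructor
  · intro h i hi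
    have := congrArg (fun t => TruncatedWittVector.coeff ⟨i, hi⟩ t) h
    simpa using this
  · intro h
    ext i
    simpa using h i i.2

lemma exists_limit (f : ℕ → W) (hf : ∀ m n, m ≤ n → (2 : W) ^ m ∣ f n - f m) :
    ∃ L : W, ∀ n, (2 : W) ^ n ∣ L - f n := by
  refine ⟨WittVector.mk 2 (fun i => (f (i + 1)).coeff i), fun n => ?_⟩
  rw [two_pow_dvd_sub_iff]
  intro i hi
  have h1 : ((f n) : W).coeff i = (f (i + 1)).coeff i :=
    (two_pow_dvd_sub_iff (i + 1) (f n) (f (i + 1))).mp (hf (i + 1) n hi) i (by omega)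
  rw [h1]
  exact congrFun (WittVector.coeff_mk 2 _) i

lemma eq_zero_of_forall_two_pow_dvd (x : W) (h : ∀ n, (2 : W) ^ n ∣ x) : x = 0 := by
  ext i
  rw [WittVector.zero_coeff]
  exact (two_pow_dvd_iff_coeff (i + 1) x).mp (h (i + 1)) i (by omega)


lemma two_irr : Irreducible (2 : W) := by
  have := WittVector.irreducible (p := 2) (k := k)
  simpa using this

lemma C_two_pow (n : ℕ) :
    ((@PowerSeries.C (WittVector 2 k) _)) ((2 : W) ^ n) = (2 : R) ^ n := by
  rw [map_pow, map_ofNat]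

lemma C_dvd_of_coeff {c : W} {F : R} (h : ∀ n, c ∣ PowerSeries.coeff n F) :
    ((@PowerSeries.C (WittVector 2 k) _)) c ∣ F := by
  refine ⟨PowerSeries.mk fun n => (h n).choose, ?_⟩
  refine PowerSeries.ext fun n => ?_
  rw [PowerSeries.coeff_C_mul, PowerSeries.coeff_mk]
  exact (h n).choose_spec

lemma two_pow_dvd_iff (n : ℕ) (F : R) :
    (2 : R) ^ n ∣ F ↔ ∀ j, (2 : W) ^ n ∣ PowerSeries.coeff j F := by
  constructor
  · rintro ⟨G, rfl⟩ j
    rw [← C_two_pow, PowerSeries.coeff_C_mul]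
    exact Dvd.intro _ rfl
  · intro h
    have := C_dvd_of_coeff (c := (2 : W) ^ n) (F := F) h
    rwa [C_two_pow] at this

lemma two_ne_zero_W : (2 : W) ≠ 0 := by
  have := WittVector.p_nonzero 2 k
  simpa using this

lemma two_ne_zero_R : (2 : R) ≠ 0 := by
  intro h
  have := congrArg ((@PowerSeries.constantCoeff (WittVector 2 k) _)) h
  rw [map_ofNat, map_zero] at this
  exact two_ne_zero_W this

lemma two_dvd_of_two_dvd_g_mul (γ : W) (u : R)
    (h : (2 : R) ∣ (PowerSeries.X - PowerSeries.C (2 * γ)) * u) : (2 : R) ∣ u := by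
  haveI : IsDiscreteValuationRing W := WittVector.isDiscreteValuationRing
  set ρ := IsLocalRing.residue W
  have hres : ∀ a : W, ρ a = 0 ↔ (2 : W) ∣ a := by
    intro a
    rw [← Ideal.mem_span_singleton, ← two_irr.maximalIdeal_eq]
    exact Ideal.Quotient.eq_zero_iff_mem
  set φ := PowerSeries.map ρ
  have hρ2 : ρ 2 = 0 := (hres 2).mpr dvd_rfl
  obtain ⟨v, hv⟩ := h
  have hmap : φ (PowerSeries.X - PowerSeries.C (2 * γ)) * φ u = φ 2 * φ v := by
    rw [← map_mul, ← map_mul, hv]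
  have hφg : φ (PowerSeries.X - PowerSeries.C (2 * γ)) = PowerSeries.X := by
    rw [map_sub, PowerSeries.map_X, PowerSeries.map_C, map_mul, hρ2, zero_mul, map_zero, sub_zero]
  have hφ2 : φ (2 : R) = 0 := by
    rw [map_ofNat]
    have : (2 : PowerSeries (IsLocalRing.ResidueField W)) =
        PowerSeries.C (2 : IsLocalRing.ResidueField W) := by rw [map_ofNat]
    rw [this]
    have h2 : (2 : IsLocalRing.ResidueField W) = 0 := by
      have : ρ 2 = (2 : IsLocalRing.ResidueField W) := map_ofNat ρ 2
      rw [← this, hρ2]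
    rw [h2, map_zero]
  rw [hφg, hφ2, zero_mul] at hmap
  have hu0 : φ u = 0 := by
    rcases mul_eq_zero.mp hmap with h | h
    · exact absurd h PowerSeries.X_ne_zero
    · exact h
  have hco : ∀ j, (2 : W) ∣ PowerSeries.coeff j u := by
    intro j
    have : ρ (PowerSeries.coeff j u) = 0 := by
      have := congrArg (PowerSeries.coeff j) hu0
      rwa [PowerSeries.coeff_map, map_zero] at this
    exact (hres _).mp this
  have := C_dvd_of_coeff hco
  rwa [map_ofNat] at this

lemma two_pow_dvd_of_dvd_g_mul (γ : W) (n : ℕ) (u : R)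
    (h : (2 : R) ^ n ∣ (PowerSeries.X - PowerSeries.C (2 * γ)) * u) :
    (2 : R) ^ n ∣ u := by
  induction n generalizing u with
  | zero => simpa using one_dvd u
  | succ n ih =>
    have h2 : (2 : R) ∣ (PowerSeries.X - PowerSeries.C (2 * γ)) * u :=
      dvd_trans (dvd_pow_self 2 (Nat.succ_ne_zero n)) h
    obtain ⟨u', rfl⟩ := two_dvd_of_two_dvd_g_mul γ u h2
    obtain ⟨v, hv⟩ := h
    have hcanc : (PowerSeries.X - PowerSeries.C (2 * γ)) * u' = 2 ^ n * v := by
      apply mul_left_cancel₀ two_ne_zero_R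
      linear_combination hv
    have := ih u' ⟨v, hcanc⟩
    rw [pow_succ']
    exact mul_dvd_mul_left 2 this

lemma two_pow_dvd_const (γ : W) (n : ℕ) {c : W} {h r : R}
    (he : PowerSeries.C c =
      (PowerSeries.X - PowerSeries.C (2 * γ)) * h + 2 ^ n * r) :
    (2 : W) ^ n ∣ c := by
  set Cc := (@PowerSeries.C (WittVector 2 k) _)
  have rel : ∀ m : ℕ, PowerSeries.coeff m h =
      2 * γ * PowerSeries.coeff (m + 1) h - (2 : W) ^ n * PowerSeries.coeff (m + 1) r := by
    intro m
    have := congrArg (PowerSeries.coeff (m + 1)) he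
    rw [PowerSeries.coeff_C, if_neg (Nat.succ_ne_zero m), map_add, sub_mul, map_sub,
      PowerSeries.coeff_succ_X_mul, PowerSeries.coeff_C_mul, ← C_two_pow,
      PowerSeries.coeff_C_mul] at this
    linear_combination -this
  have claim : ∀ j : ℕ, (2 : W) ^ n ∣
      (PowerSeries.coeff 0 h - (2 * γ) ^ j * PowerSeries.coeff j h) := by
    intro j
    induction j with
    | zero => simp
    | succ j ih =>
      obtain ⟨d, hd⟩ := ih
      refine ⟨d - (2 * γ) ^ j * PowerSeries.coeff (j + 1) r, ?_⟩
      linear_combination hd + (2 * γ) ^ j * rel j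
  obtain ⟨d, hd⟩ := claim n
  have h0 : (2 : W) ^ n ∣ PowerSeries.coeff 0 h := by
    refine ⟨d + γ ^ n * PowerSeries.coeff n h, ?_⟩
    have : (2 * γ) ^ n = 2 ^ n * γ ^ n := mul_pow 2 γ n
    linear_combination hd + PowerSeries.coeff n h * this
  have hc0 : c = -(2 * γ) * PowerSeries.coeff 0 h + (2 : W) ^ n * PowerSeries.coeff 0 r := by
    have := congrArg (PowerSeries.coeff 0) he
    rw [PowerSeries.coeff_zero_C, map_add, sub_mul, map_sub, PowerSeries.coeff_C_mul,
      ← C_two_pow, PowerSeries.coeff_C_mul] at this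
    have hX : (@PowerSeries.coeff (WittVector 2 k) _) 0 (PowerSeries.X * h) = 0 := by
      rw [PowerSeries.coeff_zero_eq_constantCoeff, map_mul, PowerSeries.constantCoeff_X, zero_mul]
    rw [hX] at this
    linear_combination this
  obtain ⟨e, he'⟩ := h0
  exact ⟨-(2 * γ) * e + PowerSeries.coeff 0 r, by linear_combination hc0 - 2 * γ * he'⟩

lemma approx (γ : W) (F : R) (n : ℕ) :
    ∃ (c : W) (h r : R), F = PowerSeries.C c +
      (PowerSeries.X - PowerSeries.C (2 * γ)) * h + 2 ^ n * r := by
  induction n with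
  | zero => exact ⟨0, 0, F, by simp⟩
  | succ n ih =>
    obtain ⟨c, h, r, hr⟩ := ih
    set r' : R := PowerSeries.mk fun p => PowerSeries.coeff (p + 1) r with hr'
    set r₀ : W := PowerSeries.constantCoeff r with hr₀
    have hsplit : r = PowerSeries.X * r' + PowerSeries.C r₀ :=
      PowerSeries.eq_X_mul_shift_add_const r
    refine ⟨c + 2 ^ n * r₀, h + 2 ^ n * r', PowerSeries.C γ * r', ?_⟩
    have hCadd : (@PowerSeries.C (WittVector 2 k) _) (c + 2 ^ n * r₀) =
        PowerSeries.C c + 2 ^ n * PowerSeries.C r₀ := by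
      rw [map_add, map_mul, C_two_pow]
    have h2γ : (@PowerSeries.C (WittVector 2 k) _) (2 * γ) = 2 * PowerSeries.C γ := by
      rw [map_mul, map_ofNat]
    rw [hCadd]
    linear_combination hr + (2 : R) ^ n * hsplit + (2 : R) ^ n * r' * h2γ

lemma g_dvd_of_approx (γ : W) (F : R)
    (hap : ∀ n, ∃ h r : R, F = (PowerSeries.X - PowerSeries.C (2 * γ)) * h + 2 ^ n * r) :
    ∃ H, F = (PowerSeries.X - PowerSeries.C (2 * γ)) * H := by
  set g : R := PowerSeries.X - PowerSeries.C (2 * γ) with hg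
  choose h r hhr using hap
  have compat : ∀ m n : ℕ, m ≤ n → (2 : R) ^ m ∣ h n - h m := by
    intro m n hmn
    apply two_pow_dvd_of_dvd_g_mul γ m
    refine ⟨r m - 2 ^ (n - m) * r n, ?_⟩
    have hpow : (2 : R) ^ m * (2 : R) ^ (n - m) = 2 ^ n := by
      rw [← pow_add, Nat.add_sub_cancel' hmn]
    linear_combination (hhr m) - (hhr n) + r n * hpow
  have compatW : ∀ j : ℕ, ∀ m n : ℕ, m ≤ n →
      (2 : W) ^ m ∣ PowerSeries.coeff j (h n) - PowerSeries.coeff j (h m) := by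
    intro j m n hmn
    have := (two_pow_dvd_iff m (h n - h m)).mp (compat m n hmn) j
    rwa [map_sub] at this
  have hlim : ∀ j : ℕ, ∃ L : W, ∀ n, (2 : W) ^ n ∣ L - PowerSeries.coeff j (h n) := by
    intro j
    exact exists_limit (fun n => PowerSeries.coeff j (h n)) (fun m n hmn => compatW j m n hmn)
  choose L hL using hlim
  set Hs : R := PowerSeries.mk L with hHs
  have hHn : ∀ n, (2 : R) ^ n ∣ Hs - h n := by
    intro n
    rw [two_pow_dvd_iff]
    intro j
    have : PowerSeries.coeff j (Hs - h n) = L j - PowerSeries.coeff j (h n) := by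
      rw [map_sub, hHs, PowerSeries.coeff_mk]
    rw [this]
    exact hL j n
  have hdvd : ∀ n, (2 : R) ^ n ∣ F - g * Hs := by
    intro n
    obtain ⟨u, hu⟩ := hHn n
    refine ⟨r n - g * u, ?_⟩
    linear_combination (hhr n) - g * hu
  refine ⟨Hs, ?_⟩
  have : F - g * Hs = 0 := by
    refine PowerSeries.ext fun j => ?_
    rw [map_zero]
    apply eq_zero_of_forall_two_pow_dvd
    intro n
    exact (two_pow_dvd_iff n _).mp (hdvd n) j
  linear_combination this


lemma classify (γ : W) (I : Ideal R)
    (hg : (PowerSeries.X - PowerSeries.C (2 * γ)) ∈ I) (hI : I ≠ ⊤) :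
    ∃ α m : ℕ, (α = 0 ∨ α = 1) ∧ 1 ≤ m ∧
      I = Ideal.span {PowerSeries.X - PowerSeries.C (2 * γ),
        (α : R) * 2 ^ m} := by
  haveI : IsDiscreteValuationRing (WittVector 2 k) := WittVector.isDiscreteValuationRing
  set g : R := PowerSeries.X - PowerSeries.C (2 * γ) with hgdef
  have red : ∀ F ∈ I, ∃ c : W, (@PowerSeries.C (WittVector 2 k) _) c ∈ I ∧
      ∃ q : R, F = PowerSeries.C c + g * q := by
    intro F hF
    have S' := approx γ F
    choose c hh rr hcr using S'
    have compat : ∀ m n : ℕ, m ≤ n → (2 : W) ^ m ∣ c n - c m := by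
      intro m n hmn
      apply two_pow_dvd_const γ m (h := hh m - hh n) (r := rr m - 2 ^ (n - m) * rr n)
      have hpow : (2 : R) ^ m * (2 : R) ^ (n - m) = 2 ^ n := by
        rw [← pow_add, Nat.add_sub_cancel' hmn]
      rw [map_sub]
      linear_combination (hcr m) - (hcr n) + rr n * hpow
    obtain ⟨L, hL⟩ := exists_limit c compat
    choose d hd using fun n => hL n
    have hap : ∀ n, ∃ h r : R, F - PowerSeries.C L = g * h + 2 ^ n * r := by
      intro n
      refine ⟨hh n, rr n - PowerSeries.C (d n), ?_⟩
      have key : (@PowerSeries.C (WittVector 2 k) _) L - PowerSeries.C (c n) =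
          2 ^ n * PowerSeries.C (d n) := by
        rw [← map_sub, hd n, map_mul, C_two_pow]
      linear_combination (hcr n) - key
    obtain ⟨Hh, hHh⟩ := g_dvd_of_approx γ (F - PowerSeries.C L) hap
    have hCL : (@PowerSeries.C (WittVector 2 k) _) L ∈ I := by
      have : (@PowerSeries.C (WittVector 2 k) _) L = F - g * Hh := by linear_combination -hHh
      rw [this]
      exact Ideal.sub_mem I hF (Ideal.mul_mem_right Hh I hg)
    exact ⟨L, hCL, Hh, by linear_combination hHh⟩
  set A : Ideal (WittVector 2 k) := Ideal.comap ((@PowerSeries.C (WittVector 2 k) _)) I with hA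
  have hAT : A ≠ ⊤ := by
    intro h
    apply hI
    rw [Ideal.eq_top_iff_one] at h ⊢
    have : (@PowerSeries.C (WittVector 2 k) _) 1 ∈ I := h
    rwa [map_one] at this
  by_cases hAbot : A = ⊥
  · refine ⟨0, 1, Or.inl rfl, le_refl 1, ?_⟩
    have hIg : I = Ideal.span {g} := by
      apply le_antisymm
      · intro F hF
        obtain ⟨cF, hcF, q, hq⟩ := red F hF
        have : cF ∈ A := hcF
        rw [hAbot] at this
        have hc0 : cF = 0 := this
        rw [Ideal.mem_span_singleton]
        exact ⟨q, by rw [hq, hc0, map_zero, zero_add]⟩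
      · rw [Ideal.span_le, Set.singleton_subset_iff]
        exact hg
    rw [hIg]
    have h0 : ((0 : ℕ) : R) * 2 ^ 1 = 0 := by norm_num
    rw [h0]
    simp [Ideal.span_insert, Set.singleton_zero, Ideal.span_zero]
  · obtain ⟨s, hs⟩ := IsDiscreteValuationRing.ideal_eq_span_pow_irreducible hAbot two_irr
    have hs1 : 1 ≤ s := by
      rcases Nat.eq_zero_or_pos s with h0 | h1
      · exfalso
        apply hAT
        rw [hs, h0, pow_zero, Ideal.span_singleton_one]
      · exact h1
    refine ⟨1, s, Or.inr rfl, hs1, ?_⟩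
    have h1 : ((1 : ℕ) : R) * 2 ^ s = 2 ^ s := by norm_num
    rw [h1]
    apply le_antisymm
    · intro F hF
      obtain ⟨cF, hcF, q, hq⟩ := red F hF
      have hcA : cF ∈ A := hcF
      rw [hs, Ideal.mem_span_singleton] at hcA
      obtain ⟨w, hw⟩ := hcA
      rw [Ideal.mem_span_pair]
      refine ⟨q, PowerSeries.C w, ?_⟩
      have : (@PowerSeries.C (WittVector 2 k) _) cF = 2 ^ s * PowerSeries.C w := by
        rw [hw, map_mul, C_two_pow]
      linear_combination -hq - this
    · rw [Ideal.span_le]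
      rintro x hx
      rcases hx with h | h
      · rw [h]; exact hg
      · rw [Set.mem_singleton_iff] at h
        rw [h, ← C_two_pow]
        have h2A : (2 : W) ^ s ∈ A := by
          rw [hs]
          exact Ideal.subset_span rfl
        exact h2A

end StmtAux


/-- Let `k` be an algebraically closed field of characteristic `2`,
`W = W(k)` the ring of infinite Witt vectors over `k`. Let `γ ∈ W` and let `f` be a nonzero
element of `W[[t]]`. Then every ideal `J` of `W[[t]]` with
`f·(t − 2γ)·W[[t]] ⊆ J ⊊ f·W[[t]]` is of the form `(f·(t − 2γ), α·2^m·f)` for some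
`α ∈ {0,1}` and some integer `m ≥ 1`. -/
theorem ideal_between_eq_span {k : Type*} [Field k] [IsAlgClosed k] [CharP k 2]
    (γ : WittVector 2 k) (f : PowerSeries (WittVector 2 k)) (hf : f ≠ 0)
    (J : Ideal (PowerSeries (WittVector 2 k)))
    (hJ₁ : Ideal.span {f * (PowerSeries.X - PowerSeries.C (2 * γ))} ≤ J)
    (hJ₂ : J < Ideal.span {f}) :
    ∃ (α m : ℕ), (α = 0 ∨ α = 1) ∧ 1 ≤ m ∧
      J = Ideal.span {f * (PowerSeries.X - PowerSeries.C (2 * γ)),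
        (α : PowerSeries (WittVector 2 k)) * 2 ^ m * f} := by
  set g : PowerSeries (WittVector 2 k) :=
    PowerSeries.X - PowerSeries.C (2 * γ) with hgdef
  set I : Ideal (PowerSeries (WittVector 2 k)) := J.colon (Ideal.span {f}) with hIdef
  have hmem : ∀ x : PowerSeries (WittVector 2 k), x ∈ I ↔ x * f ∈ J := fun x =>
    Ideal.mem_colon_span_singleton
  have hfg : f * g ∈ J := hJ₁ (Ideal.subset_span rfl)
  have hgI : g ∈ I := (hmem g).mpr (by rwa [mul_comm])
  have hIne : I ≠ ⊤ := by
    intro h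
    have h1 : (1 : PowerSeries (WittVector 2 k)) ∈ I := h ▸ trivial
    have hfJ : f ∈ J := by simpa using (hmem 1).mp h1
    have : Ideal.span {f} ≤ J := by
      rw [Ideal.span_le, Set.singleton_subset_iff]; exact hfJ
    exact (not_le_of_gt hJ₂) this
  obtain ⟨α, m, hα, hm, hI⟩ := StmtAux.classify γ I hgI hIne
  refine ⟨α, m, hα, hm, ?_⟩
  apply le_antisymm
  · intro x hx
    have hxf : x ∈ Ideal.span {f} := hJ₂.le hx
    rw [Ideal.mem_span_singleton'] at hxf
    obtain ⟨a, ha⟩ := hxf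
    have haI : a ∈ I := (hmem a).mpr (by rwa [ha])
    rw [hI, Ideal.mem_span_pair] at haI
    obtain ⟨u, v, huv⟩ := haI
    rw [Ideal.mem_span_pair]
    exact ⟨u, v, by linear_combination f * huv + ha⟩
  · rw [Ideal.span_le]
    rintro x hx
    rcases hx with h | h
    · rw [h]; exact hfg
    · rw [Set.mem_singleton_iff] at h
      have hαI : (α : PowerSeries (WittVector 2 k)) * 2 ^ m ∈ I := by
        rw [hI]
        exact Ideal.subset_span (Or.inr rfl)
      have := (hmem _).mp hαI
      rwa [← h] at this
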